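/- For every y > α, H(y) > 0. -/

import Mathlib

open Real

noncomputable def HFJ (α β : ℝ) (y : ℝ) : ℝ :=
  β * α ^ (β + 1) * Real.exp (y - α) - β * α ^ (β + 1) - y ^ (β + 2)
    + y ^ (β + 1) * Real.exp (y - α) - y ^ (β + 1) + α ^ (β + 1) * y

theorem stmt_10 (α β : ℝ) (hβ : 0 ≤ β) (hαβ : β < α) (y : ℝ) (hy : α < y) :
    0 < HFJ α β y := by
  have hα0 : 0 < α := lt_of_le_of_lt hβ hαβ
  -- first derivative function
  set f1 : ℝ → ℝ := fun z => β * α ^ (β + 1) * Real.exp (z - α) - (β + 2) * z ^ (β + 1)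
      + ((β + 1) * z ^ β * Real.exp (z - α) + z ^ (β + 1) * Real.exp (z - α))
      - (β + 1) * z ^ β + α ^ (β + 1) with hf1
  -- second derivative function
  set f2 : ℝ → ℝ := fun z => β * α ^ (β + 1) * Real.exp (z - α)
      - (β + 2) * ((β + 1) * z ^ β)
      + (((β + 1) * (β * z ^ (β - 1)) * Real.exp (z - α) + (β + 1) * z ^ β * Real.exp (z - α))
        + ((β + 1) * z ^ β * Real.exp (z - α) + z ^ (β + 1) * Real.exp (z - α)))
      - (β + 1) * (β * z ^ (β - 1)) with hf2
  have hexp : ∀ z : ℝ, HasDerivAt (fun w : ℝ => Real.exp (w - α)) (Real.exp (z - α)) z := by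
    intro z
    simpa using ((hasDerivAt_id z).sub_const α).exp
  have hpow : ∀ (p : ℝ) (z : ℝ), z ≠ 0 → HasDerivAt (fun w : ℝ => w ^ p) (p * z ^ (p - 1)) z :=
    fun p z hz => Real.hasDerivAt_rpow_const (Or.inl hz)
  have hd0 : ∀ z : ℝ, 0 < z → HasDerivAt (HFJ α β) (f1 z) z := by
    intro z hz
    have h1 : HasDerivAt (fun w : ℝ => w ^ (β + 1)) ((β + 1) * z ^ β) z := by
      simpa [show β + 1 - 1 = β by ring] using hpow (β + 1) z hz.ne'
    have h2 : HasDerivAt (fun w : ℝ => w ^ (β + 2)) ((β + 2) * z ^ (β + 1)) z := by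
      simpa [show β + 2 - 1 = β + 1 by ring] using hpow (β + 2) z hz.ne'
    have H := (((((((hexp z).const_mul (β * α ^ (β + 1))).sub_const (β * α ^ (β + 1))).sub
      h2).add (h1.mul (hexp z))).sub h1).add ((hasDerivAt_id z).const_mul (α ^ (β + 1))))
    refine H.congr_deriv ?_
    simp only [hf1]
    ring
  have hd1 : ∀ z : ℝ, 0 < z → HasDerivAt f1 (f2 z) z := by
    intro z hz
    have h1 : HasDerivAt (fun w : ℝ => w ^ (β + 1)) ((β + 1) * z ^ β) z := by
      simpa [show β + 1 - 1 = β by ring] using hpow (β + 1) z hz.ne'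
    have hb : HasDerivAt (fun w : ℝ => w ^ β) (β * z ^ (β - 1)) z := hpow β z hz.ne'
    have H := (((((hexp z).const_mul (β * α ^ (β + 1))).sub (h1.const_mul (β + 2))).add
      (((hb.const_mul (β + 1)).mul (hexp z)).add (h1.mul (hexp z)))).sub
      (hb.const_mul (β + 1))).add_const (α ^ (β + 1))
    exact H
  -- positivity of f2 on [α, ∞)
  have hf2pos : ∀ z : ℝ, α ≤ z → 0 < f2 z := by
    intro z hz
    have hz0 : 0 < z := lt_of_lt_of_le hα0 hz
    set E := Real.exp (z - α) with hE
    have hE1 : 1 ≤ E := Real.one_le_exp (by linarith)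
    have hzb : 0 < z ^ β := Real.rpow_pos_of_pos hz0 β
    have hzbm : 0 ≤ z ^ (β - 1) := (Real.rpow_pos_of_pos hz0 (β - 1)).le
    have hzb1 : z ^ (β + 1) = z ^ β * z := Real.rpow_add_one hz0.ne' β
    -- key: E * (β * α^(β+1)) ≥ β * α * z^β
    have hkey : β * α * z ^ β ≤ E * (β * α ^ (β + 1)) := by
      have hzα : 0 < z / α := div_pos hz0 hα0
      have hlog : Real.log (z / α) ≤ z / α - 1 := Real.log_le_sub_one_of_pos hzα
      have hlog2 : β * Real.log (z / α) ≤ z - α := by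
        have h3 : β * Real.log (z / α) ≤ β * (z / α - 1) :=
          mul_le_mul_of_nonneg_left hlog hβ
        have h4 : β * (z / α - 1) ≤ z - α := by
          rw [div_sub_one hα0.ne', mul_div_assoc', div_le_iff₀ hα0]
          nlinarith [sub_nonneg.mpr hz]
        linarith
      have hrw : (z / α) ^ β ≤ E := by
        rw [Real.rpow_def_of_pos hzα, hE]
        exact Real.exp_le_exp.mpr (by linarith [hlog2, mul_comm β (Real.log (z / α))])
      have hval : (z / α) ^ β * (β * α ^ (β + 1)) = β * α * z ^ β := by
        rw [Real.div_rpow hz0.le hα0.le, Real.rpow_add_one hα0.ne' β]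
        have hαb : (0:ℝ) < α ^ β := Real.rpow_pos_of_pos hα0 β
        field_simp
      calc β * α * z ^ β = (z / α) ^ β * (β * α ^ (β + 1)) := hval.symm
        _ ≤ E * (β * α ^ (β + 1)) := by
            apply mul_le_mul_of_nonneg_right hrw
            positivity
    have hββ : β * β ≤ β * α := mul_le_mul_of_nonneg_left hαβ.le hβ
    have hβz : β < z := lt_of_lt_of_le hαβ hz
    have hfinal : 0 < z ^ β * (β * α + z - β * β - β) := by
      apply mul_pos hzb; nlinarith
    have t1 : 0 ≤ β * z ^ (β - 1) * (E - 1) := by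
      apply mul_nonneg (mul_nonneg hβ hzbm); linarith
    have t2 : 0 ≤ z ^ β * (E - 1) := by
      apply mul_nonneg hzb.le; linarith
    have t3 : 0 ≤ z ^ (β + 1) * (E - 1) := by
      apply mul_nonneg (Real.rpow_pos_of_pos hz0 (β + 1)).le; linarith
    simp only [hf2]
    nlinarith [hkey, hfinal, t1, t2, t3, hzb1, mul_nonneg hβ hzbm]
  -- f1 α = 0
  have hf1α : f1 α = 0 := by
    simp only [hf1]
    rw [sub_self, Real.exp_zero]
    ring
  -- HFJ α β α = 0
  have hHα : HFJ α β α = 0 := by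
    unfold HFJ
    rw [show β + 2 = (β + 1) + 1 by ring, Real.rpow_add_one hα0.ne' (β + 1), sub_self,
      Real.exp_zero]
    ring
  -- f1 strictly monotone on Ici α
  have hmono1 : StrictMonoOn f1 (Set.Ici α) := by
    apply strictMonoOn_of_deriv_pos (convex_Ici α)
    · intro x hx
      exact (hd1 x (lt_of_lt_of_le hα0 hx)).continuousAt.continuousWithinAt
    · intro x hx
      rw [interior_Ici] at hx
      rw [(hd1 x (lt_trans hα0 hx)).deriv]
      exact hf2pos x hx.le
  have hf1pos : ∀ x : ℝ, α < x → 0 < f1 x := by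
    intro x hx
    have := hmono1 (Set.self_mem_Ici) (Set.mem_Ici.mpr hx.le) hx
    rwa [hf1α] at this
  have hmono0 : StrictMonoOn (HFJ α β) (Set.Ici α) := by
    apply strictMonoOn_of_deriv_pos (convex_Ici α)
    · intro x hx
      exact (hd0 x (lt_of_lt_of_le hα0 hx)).continuousAt.continuousWithinAt
    · intro x hx
      rw [interior_Ici] at hx
      rw [(hd0 x (lt_trans hα0 hx)).deriv]
      exact hf1pos x hx
  have := hmono0 (Set.self_mem_Ici) (Set.mem_Ici.mpr hy.le) hy
  rwa [hHα] at this
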